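/- Let A be the arrangement of 11 hyperplanes in ℚ^5 with defining polynomial Q(A) = x_1x_2x_3x_4x_5(x_1+x_3)(x_1+x_3+x_5)(x_1+x_2+x_4)(x_1+x_2+x_4+x_5)(x_1+x_2+x_3+x_5)(x_1+x_2+x_3+x_4+x_5), with the defining forms α_1,…,α_11 in the listed order. Then the relation space F(A) has dimension 6, and the six length-3 relations α_1+α_3−α_6, α_2+α_7−α_10, α_3+α_9−α_11, α_4+α_10−α_11, α_5+α_6−α_7, α_5+α_8−α_9 form a basis of F(A); in particular F_2(A) = F(A), so A is formal. -/

import Mathlib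

open Submodule

section ArrangementBasics

variable {𝕂 : Type*} [Field 𝕂] {V : Type*} [AddCommGroup V] [Module 𝕂 V]

/-- `H` is a (linear) hyperplane: the kernel of a nonzero linear form. -/
def IsHyperplane (H : Submodule 𝕂 V) : Prop :=
  ∃ f : Module.Dual 𝕂 V, f ≠ 0 ∧ LinearMap.ker f = H

/-- A central arrangement: a finite set of linear hyperplanes. -/
def IsArrangement (A : Set (Submodule 𝕂 V)) : Prop :=
  A.Finite ∧ ∀ H ∈ A, IsHyperplane H

/-- The intersection lattice `L(A)`: all intersections of subsets of `A`
(with the ambient space `⊤ = sInf ∅` included). -/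
def interLattice (A : Set (Submodule 𝕂 V)) : Set (Submodule 𝕂 V) :=
  {X | ∃ B ⊆ A, X = sInf B}

/-- The rank of an intersection: its codimension in the ambient space. -/
noncomputable def rk (X : Submodule 𝕂 V) : ℕ := Module.finrank 𝕂 (V ⧸ X)

/-- The localization `A_X` of `A` at `X`: all hyperplanes of `A` containing `X`. -/
def locz (A : Set (Submodule 𝕂 V)) (X : Submodule 𝕂 V) : Set (Submodule 𝕂 V) :=
  {H | H ∈ A ∧ X ≤ H}

/-- The restriction `A^Z` of `A` to `Z`, an arrangement in (the vector space) `Z`: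
the subspaces `Z ∩ H` for `H ∈ A ∖ A_Z`, viewed as submodules of `Z`. -/
def restr (A : Set (Submodule 𝕂 V)) (Z : Submodule 𝕂 V) : Set (Submodule 𝕂 ↥Z) :=
  {K | ∃ H ∈ A, ¬ Z ≤ H ∧ K = (Z ⊓ H).comap Z.subtype}

/-- `α` is a choice of defining linear forms for the arrangement `A`. -/
def IsDefiningForms (A : Set (Submodule 𝕂 V)) (α : Submodule 𝕂 V → Module.Dual 𝕂 V) : Prop :=
  ∀ H ∈ A, LinearMap.ker (α H) = H

/-- The relation space `F(A)` with respect to the chosen defining forms `α`: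
the kernel of `⊕_{H ∈ A} 𝕂·e_H → V*`, `e_H ↦ α_H`, realized as the space of finitely
supported coefficient functions supported on `A` whose linear combination vanishes. -/
noncomputable def relSpace (A : Set (Submodule 𝕂 V)) (α : Submodule 𝕂 V → Module.Dual 𝕂 V) :
    Submodule 𝕂 (Submodule 𝕂 V →₀ 𝕂) :=
  Finsupp.supported 𝕂 𝕂 A ⊓ LinearMap.ker (Finsupp.linearCombination 𝕂 α)

/-- `F_2(A)`: the span of the elements of `F(A)` of length at most `3`. -/
noncomputable def relSpace2 (A : Set (Submodule 𝕂 V)) (α : Submodule 𝕂 V → Module.Dual 𝕂 V) :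
    Submodule 𝕂 (Submodule 𝕂 V →₀ 𝕂) :=
  Submodule.span 𝕂 {c | c ∈ relSpace A α ∧ c.support.card ≤ 3}

/-- `A` is formal if `F_2(A) = F(A)` (for any choice of defining forms). -/
def IsFormal (A : Set (Submodule 𝕂 V)) : Prop :=
  ∀ α : Submodule 𝕂 V → Module.Dual 𝕂 V,
    IsDefiningForms A α → relSpace2 A α = relSpace A α

end ArrangementBasics


noncomputable section Example51

/-- The `i`-th coordinate form on `ℚ^5`. -/
def pr5 (i : Fin 5) : Module.Dual ℚ (Fin 5 → ℚ) := LinearMap.proj i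

/-- The `11` defining forms of the arrangement of Example 5.1, in the order in which
they appear in `Q(A) = x₁x₂x₃x₄x₅(x₁+x₃)(x₁+x₃+x₅)(x₁+x₂+x₄)(x₁+x₂+x₄+x₅)
(x₁+x₂+x₃+x₅)(x₁+x₂+x₃+x₄+x₅)`. -/
def exForms : Fin 11 → Module.Dual ℚ (Fin 5 → ℚ) :=
  ![pr5 0, pr5 1, pr5 2, pr5 3, pr5 4,
    pr5 0 + pr5 2, pr5 0 + pr5 2 + pr5 4,
    pr5 0 + pr5 1 + pr5 3, pr5 0 + pr5 1 + pr5 3 + pr5 4,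
    pr5 0 + pr5 1 + pr5 2 + pr5 4,
    pr5 0 + pr5 1 + pr5 2 + pr5 3 + pr5 4]

/-- The relation space `F(A)` of the arrangement of Example 5.1: the kernel of
`(c_i) ↦ Σ_i c_i α_i`. -/
def exRelSpace : Submodule ℚ (Fin 11 → ℚ) :=
  LinearMap.ker (Fintype.linearCombination ℚ exForms)

/-- `F_2(A)`: the span of the relations of length at most `3`. -/
def exRelSpace2 : Submodule ℚ (Fin 11 → ℚ) :=
  Submodule.span ℚ
    {c | c ∈ exRelSpace ∧ (Finset.univ.filter fun i => c i ≠ 0).card ≤ 3}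

/-- The six length-3 relations `α₁+α₃−α₆`, `α₂+α₇−α₁₀`, `α₃+α₉−α₁₁`, `α₄+α₁₀−α₁₁`,
`α₅+α₆−α₇`, `α₅+α₈−α₉` (as coefficient vectors). -/
def exRels : Fin 6 → (Fin 11 → ℚ) :=
  ![![1, 0, 1, 0, 0, -1, 0, 0, 0, 0, 0],
    ![0, 1, 0, 0, 0, 0, 1, 0, 0, -1, 0],
    ![0, 0, 1, 0, 0, 0, 0, 0, 1, 0, -1],
    ![0, 0, 0, 1, 0, 0, 0, 0, 0, 1, -1],
    ![0, 0, 0, 0, 1, 1, -1, 0, 0, 0, 0],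
    ![0, 0, 0, 0, 1, 0, 0, 1, -1, 0, 0]]

end Example51

noncomputable section Helpers51

open Finset

section ConsLemmas
variable {α : Type*}
@[simp] lemma cons_val_6_5 (x : α) (u : Fin 5 → α) : Matrix.vecCons x u (5 : Fin 6) = u 4 := rfl
@[simp] lemma cons_val_7_5 (x : α) (u : Fin 6 → α) : Matrix.vecCons x u (5 : Fin 7) = u 4 := rfl
@[simp] lemma cons_val_7_6 (x : α) (u : Fin 6 → α) : Matrix.vecCons x u (6 : Fin 7) = u 5 := rfl
@[simp] lemma cons_val_8_5 (x : α) (u : Fin 7 → α) : Matrix.vecCons x u (5 : Fin 8) = u 4 := rfl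
@[simp] lemma cons_val_8_6 (x : α) (u : Fin 7 → α) : Matrix.vecCons x u (6 : Fin 8) = u 5 := rfl
@[simp] lemma cons_val_8_7 (x : α) (u : Fin 7 → α) : Matrix.vecCons x u (7 : Fin 8) = u 6 := rfl
@[simp] lemma cons_val_9_5 (x : α) (u : Fin 8 → α) : Matrix.vecCons x u (5 : Fin 9) = u 4 := rfl
@[simp] lemma cons_val_9_6 (x : α) (u : Fin 8 → α) : Matrix.vecCons x u (6 : Fin 9) = u 5 := rfl
@[simp] lemma cons_val_9_7 (x : α) (u : Fin 8 → α) : Matrix.vecCons x u (7 : Fin 9) = u 6 := rfl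
@[simp] lemma cons_val_9_8 (x : α) (u : Fin 8 → α) : Matrix.vecCons x u (8 : Fin 9) = u 7 := rfl
@[simp] lemma cons_val_10_5 (x : α) (u : Fin 9 → α) : Matrix.vecCons x u (5 : Fin 10) = u 4 := rfl
@[simp] lemma cons_val_10_6 (x : α) (u : Fin 9 → α) : Matrix.vecCons x u (6 : Fin 10) = u 5 := rfl
@[simp] lemma cons_val_10_7 (x : α) (u : Fin 9 → α) : Matrix.vecCons x u (7 : Fin 10) = u 6 := rfl
@[simp] lemma cons_val_10_8 (x : α) (u : Fin 9 → α) : Matrix.vecCons x u (8 : Fin 10) = u 7 := rfl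
@[simp] lemma cons_val_10_9 (x : α) (u : Fin 9 → α) : Matrix.vecCons x u (9 : Fin 10) = u 8 := rfl
@[simp] lemma cons_val_11_5 (x : α) (u : Fin 10 → α) : Matrix.vecCons x u (5 : Fin 11) = u 4 := rfl
@[simp] lemma cons_val_11_6 (x : α) (u : Fin 10 → α) : Matrix.vecCons x u (6 : Fin 11) = u 5 := rfl
@[simp] lemma cons_val_11_7 (x : α) (u : Fin 10 → α) : Matrix.vecCons x u (7 : Fin 11) = u 6 := rfl
@[simp] lemma cons_val_11_8 (x : α) (u : Fin 10 → α) : Matrix.vecCons x u (8 : Fin 11) = u 7 := rfl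
@[simp] lemma cons_val_11_9 (x : α) (u : Fin 10 → α) : Matrix.vecCons x u (9 : Fin 11) = u 8 := rfl
@[simp] lemma cons_val_11_10 (x : α) (u : Fin 10 → α) : Matrix.vecCons x u (10 : Fin 11) = u 9 := rfl
end ConsLemmas
def exMatZ : Fin 11 → Fin 5 → ℤ :=
  ![![1,0,0,0,0],![0,1,0,0,0],![0,0,1,0,0],![0,0,0,1,0],![0,0,0,0,1],
    ![1,0,1,0,0],![1,0,1,0,1],![1,1,0,1,0],![1,1,0,1,1],![1,1,1,0,1],![1,1,1,1,1]]

def exMat : Fin 11 → Fin 5 → ℚ := fun i j => (exMatZ i j : ℚ)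

lemma exForms_apply (i : Fin 11) (v : Fin 5 → ℚ) :
    exForms i v = ∑ j, exMat i j * v j := by
  fin_cases i <;>
    simp [exForms, pr5, exMat, exMatZ, Fin.sum_univ_five]

def exPtZ : Fin 11 → Fin 5 → ℤ :=
  ![![0, 1, -3, 3, -2], ![1, 0, -2, 1, 2], ![1, 2, 0, 1, -2], ![-3, -1, -3, 0, -3],
    ![-2, -3, 3, -2, 0], ![1, 2, -1, -2, 1], ![3, 3, -2, -1, -1], ![1, -3, -3, 2, 1],
    ![2, -3, 1, -1, 2], ![1, -1, 1, 3, -1], ![-1, 3, -2, 3, -3]]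

def exPt : Fin 11 → Fin 5 → ℚ := fun i l => (exPtZ i l : ℚ)

lemma exMatZ_exPtZ : ∀ i j : Fin 11, (∑ l, exMatZ j l * exPtZ i l = 0) ↔ j = i := by decide

lemma exForms_exPt (i j : Fin 11) : exForms j (exPt i) = 0 ↔ j = i := by
  rw [exForms_apply, ← exMatZ_exPtZ i j]
  rw [show ∑ l, exMat j l * exPt i l = ((∑ l, exMatZ j l * exPtZ i l : ℤ) : ℚ) by
    push_cast [exMat, exPt]; ring]
  exact Int.cast_eq_zero

def exOne : Fin 11 → Fin 5 → ℚ :=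
  ![![1,0,0,0,0],![0,1,0,0,0],![0,0,1,0,0],![0,0,0,1,0],![0,0,0,0,1],
    ![1,0,0,0,0],![1,0,0,0,0],![1,0,0,0,0],![1,0,0,0,0],![1,0,0,0,0],![1,0,0,0,0]]

lemma exForms_exOne (i : Fin 11) : exForms i (exOne i) = 1 := by
  rw [exForms_apply]
  fin_cases i <;> norm_num [exMat, exMatZ, exOne, Fin.sum_univ_five, Matrix.cons_val_two, Matrix.cons_val_three, Matrix.cons_val_four]

lemma ker_le_smul (f g : Module.Dual ℚ (Fin 5 → ℚ)) (x : Fin 5 → ℚ) (hx : f x = 1)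
    (h : LinearMap.ker f ≤ LinearMap.ker g) : g = g x • f := by
  apply LinearMap.ext; intro v
  have hv : v - f v • x ∈ LinearMap.ker f := by
    rw [LinearMap.mem_ker, map_sub, map_smul, smul_eq_mul, hx, mul_one, sub_self]
  have h2 := h hv
  rw [LinearMap.mem_ker, map_sub, map_smul, sub_eq_zero] at h2
  rw [LinearMap.smul_apply, smul_eq_mul, h2, smul_eq_mul, mul_comm]

lemma exKer_inj : Function.Injective (fun i => LinearMap.ker (exForms i)) := by
  intro i i' h
  simp only at h
  have h1 : exPt i ∈ LinearMap.ker (exForms i) := by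
    rw [LinearMap.mem_ker, exForms_exPt]
  rw [h] at h1
  rw [LinearMap.mem_ker, exForms_exPt] at h1
  exact h1.symm

lemma exRels_mem (j : Fin 6) : exRels j ∈ exRelSpace := by
  rw [exRelSpace, LinearMap.mem_ker]
  apply LinearMap.ext; intro v
  rw [Fintype.linearCombination_apply]
  simp only [LinearMap.sum_apply, LinearMap.smul_apply, smul_eq_mul, exForms_apply,
    LinearMap.zero_apply]
  fin_cases j <;>
    norm_num [exRels, exMat, exMatZ, Fin.sum_univ_succ] <;> ring

lemma exRels_indep : LinearIndependent ℚ exRels := by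
  rw [Fintype.linearIndependent_iff]
  intro g hg
  have h0 := congrFun hg 0
  have h1 := congrFun hg 1
  have h2 := congrFun hg 2
  have h3 := congrFun hg 3
  have h4 := congrFun hg 4
  have h7 := congrFun hg 7
  simp only [Finset.sum_apply, Fin.sum_univ_six, Pi.smul_apply, smul_eq_mul, Pi.zero_apply, exRels, Matrix.cons_val] at h0 h1 h2 h3 h4 h7
  norm_num [Fin.sum_univ_six, exRels, Pi.add_apply, Pi.smul_apply, smul_eq_mul,
    Matrix.vecHead, Matrix.vecTail, Pi.zero_apply] at h0 h1 h2 h3 h4 h7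
  intro i
  fin_cases i <;> simp <;> linarith

lemma exT_single (i : Fin 11) :
    Fintype.linearCombination ℚ exForms (Pi.single i 1) = exForms i := by
  rw [Fintype.linearCombination_apply]
  rw [Finset.sum_eq_single i]
  · simp
  · intro b _ hb; simp [Pi.single_apply, hb]
  · simp

lemma exT_surj : LinearMap.range (Fintype.linearCombination ℚ exForms) = ⊤ := by
  rw [eq_top_iff]
  rintro f -
  have hf : f = ∑ l : Fin 5, f (Pi.single l 1) • pr5 l := by
    apply LinearMap.ext; intro v
    rw [LinearMap.pi_apply_eq_sum_univ f v]
    simp only [LinearMap.sum_apply, LinearMap.smul_apply, pr5, LinearMap.proj_apply,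
      smul_eq_mul]
    refine Finset.sum_congr rfl fun x _ => ?_
    rw [mul_comm]
    have : (fun j => if x = j then (1:ℚ) else 0) = Pi.single x 1 := by
      funext j
      simp [Pi.single_apply, eq_comm]
    rw [this]
  rw [hf]
  apply Submodule.sum_mem
  intro l _
  apply Submodule.smul_mem
  exact ⟨Pi.single (Fin.castLE (by norm_num) l) 1, by
    rw [exT_single]; fin_cases l <;> rfl⟩

lemma exRelSpace_finrank : Module.finrank ℚ ↥exRelSpace = 6 := by
  have h := LinearMap.finrank_range_add_finrank_ker (Fintype.linearCombination ℚ exForms)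
  rw [exT_surj, finrank_top, Subspace.dual_finrank_eq] at h
  rw [Module.finrank_fintype_fun_eq_card, Fintype.card_fin] at h
  rw [Module.finrank_fintype_fun_eq_card, Fintype.card_fin] at h
  rw [exRelSpace]
  omega

lemma exSpan_eq : Submodule.span ℚ (Set.range exRels) = exRelSpace := by
  apply Submodule.eq_of_le_of_finrank_le
  · rw [Submodule.span_le]
    rintro _ ⟨j, rfl⟩
    exact exRels_mem j
  · rw [exRelSpace_finrank, finrank_span_eq_card exRels_indep]
    simp

lemma exRels_card (j : Fin 6) :
    (Finset.univ.filter fun i => exRels j i ≠ 0).card ≤ 3 := by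
  fin_cases j <;> simp [exRels, Finset.filter] <;> decide

lemma exRelSpace2_eq : exRelSpace2 = exRelSpace := by
  apply le_antisymm
  · rw [exRelSpace2, Submodule.span_le]
    rintro c ⟨hc, -⟩
    exact hc
  · rw [← exSpan_eq, exRelSpace2, Submodule.span_le]
    rintro _ ⟨j, rfl⟩
    exact Submodule.subset_span ⟨exRels_mem j, exRels_card j⟩


lemma exFormal : IsFormal {H | ∃ i, H = LinearMap.ker (exForms i)} := by
  classical
  intro α hα
  set A : Set (Submodule ℚ (Fin 5 → ℚ)) := {H | ∃ i, H = LinearMap.ker (exForms i)} with hA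
  set k : Fin 11 → Submodule ℚ (Fin 5 → ℚ) := fun i => LinearMap.ker (exForms i) with hk
  have hmemA : ∀ i, k i ∈ A := fun i => ⟨i, rfl⟩
  have hkerα : ∀ i, LinearMap.ker (α (k i)) = LinearMap.ker (exForms i) :=
    fun i => hα (k i) (hmemA i)
  set d : Fin 11 → ℚ := fun i => (α (k i)) (exOne i) with hdd
  have hd : ∀ i, α (k i) = d i • exForms i := fun i =>
    ker_le_smul _ _ _ (exForms_exOne i) (le_of_eq (hkerα i).symm)
  have hd0 : ∀ i, d i ≠ 0 := by
    intro i h0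
    have hz : α (k i) = 0 := by rw [hd i, h0, zero_smul]
    have h1 : exOne i ∈ LinearMap.ker (α (k i)) := by rw [hz]; simp
    rw [hkerα i, LinearMap.mem_ker, exForms_exOne] at h1
    exact one_ne_zero h1
  set Ψ : (Fin 11 → ℚ) →ₗ[ℚ] (Submodule ℚ (Fin 5 → ℚ) →₀ ℚ) :=
    ∑ i, (Finsupp.lsingle (k i)).comp ((d i)⁻¹ • LinearMap.proj i) with hΨ
  have hΨapp : ∀ w : Fin 11 → ℚ, Ψ w = ∑ i, Finsupp.single (k i) ((d i)⁻¹ * w i) := by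
    intro w
    rw [hΨ, LinearMap.sum_apply]
    refine Finset.sum_congr rfl fun i _ => ?_
    simp [Finsupp.lsingle]
  -- membership of images in relSpace A α
  have hΨmem : ∀ w ∈ exRelSpace, Ψ w ∈ relSpace A α := by
    intro w hw
    rw [relSpace, Submodule.mem_inf]
    constructor
    · rw [Finsupp.mem_supported]
      intro H hH
      rw [hΨapp w] at hH
      obtain ⟨i, -, hHi⟩ := Finsupp.mem_support_finset_sum H hH
      have := Finsupp.support_single_subset hHi
      rw [Finset.mem_singleton] at this
      rw [this]
      exact hmemA i
    · rw [LinearMap.mem_ker, hΨapp w, map_sum]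
      have : ∀ i ∈ Finset.univ, Finsupp.linearCombination ℚ α
          (Finsupp.single (k i) ((d i)⁻¹ * w i)) = w i • exForms i := by
        intro i _
        rw [Finsupp.linearCombination_single, hd i, smul_smul,
          show (d i)⁻¹ * w i * d i = w i by rw [mul_comm ((d i)⁻¹) (w i), mul_assoc, inv_mul_cancel₀ (hd0 i), mul_one]]
      rw [Finset.sum_congr rfl this]
      rw [exRelSpace, LinearMap.mem_ker, Fintype.linearCombination_apply] at hw
      exact hw
  -- support bound
  have hΨcard : ∀ j : Fin 6, (Ψ (exRels j)).support.card ≤ 3 := by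
    intro j
    have hsub : (Ψ (exRels j)).support ⊆
        (Finset.univ.filter fun i => exRels j i ≠ 0).image k := by
      intro H hH
      rw [hΨapp] at hH
      obtain ⟨i, -, hHi⟩ := Finsupp.mem_support_finset_sum H hH
      have h1 := Finsupp.support_single_subset hHi
      rw [Finset.mem_singleton] at h1
      have h2 : exRels j i ≠ 0 := by
        intro h0
        rw [h0, mul_zero, Finsupp.single_zero] at hHi
        simp at hHi
      exact Finset.mem_image.mpr ⟨i, Finset.mem_filter.mpr ⟨Finset.mem_univ i, h2⟩, h1.symm⟩
    calc (Ψ (exRels j)).support.card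
        ≤ ((Finset.univ.filter fun i => exRels j i ≠ 0).image k).card :=
          Finset.card_le_card hsub
      _ ≤ (Finset.univ.filter fun i => exRels j i ≠ 0).card := Finset.card_image_le
      _ ≤ 3 := exRels_card j
  apply le_antisymm
  · rw [relSpace2, Submodule.span_le]
    rintro c ⟨hc, -⟩
    exact hc
  · intro c hc
    obtain ⟨hcsupp, hcker⟩ := Submodule.mem_inf.mp hc
    rw [Finsupp.mem_supported] at hcsupp
    have hsub : c.support ⊆ Finset.image k Finset.univ := by
      intro H hH
      obtain ⟨i, hi⟩ := hcsupp hH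
      exact Finset.mem_image.mpr ⟨i, Finset.mem_univ i, hi.symm⟩
    set v : Fin 11 → ℚ := fun i => d i * c (k i) with hv
    have hveq : Finsupp.linearCombination ℚ α c = ∑ i, c (k i) • α (k i) := by
      rw [Finsupp.linearCombination_apply, Finsupp.sum]
      rw [Finset.sum_subset hsub (fun H _ hH => by
        rw [Finsupp.notMem_support_iff.mp hH, zero_smul])]
      rw [Finset.sum_image (fun i _ j _ h => exKer_inj h)]
    have hvmem : v ∈ exRelSpace := by
      rw [exRelSpace, LinearMap.mem_ker, Fintype.linearCombination_apply]
      have : ∑ i, v i • exForms i = ∑ i, c (k i) • α (k i) := by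
        refine Finset.sum_congr rfl fun i _ => ?_
        rw [hd i, smul_smul, hv, mul_comm]
      rw [this, ← hveq]
      exact LinearMap.mem_ker.mp hcker
    have hΨv : Ψ v = c := by
      ext H
      rw [hΨapp, Finsupp.finset_sum_apply]
      have hterm : ∀ i ∈ Finset.univ, Finsupp.single (k i) ((d i)⁻¹ * v i) H =
          if k i = H then c (k i) else 0 := by
        intro i _
        rw [Finsupp.single_apply, hv]
        rw [show (d i)⁻¹ * (d i * c (k i)) = c (k i) by
          rw [← mul_assoc, inv_mul_cancel₀ (hd0 i), one_mul]]
      rw [Finset.sum_congr rfl hterm]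
      by_cases hH : H ∈ Finset.image k Finset.univ
      · obtain ⟨i0, -, rfl⟩ := Finset.mem_image.mp hH
        rw [Finset.sum_eq_single i0]
        · rw [if_pos rfl]
        · intro b _ hb
          exact if_neg fun h => hb (exKer_inj h)
        · intro h
          exact absurd (Finset.mem_univ i0) h
      · rw [Finset.sum_eq_zero (fun i _ => if_neg fun h =>
          hH (Finset.mem_image.mpr ⟨i, Finset.mem_univ i, h⟩)), eq_comm]
        rw [← Finsupp.notMem_support_iff]
        exact fun h => hH (hsub h)
    rw [← hΨv]
    have : v ∈ Submodule.span ℚ (Set.range exRels) := by rw [exSpan_eq]; exact hvmem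
    have hmap : Ψ v ∈ Submodule.map Ψ (Submodule.span ℚ (Set.range exRels)) :=
      Submodule.mem_map_of_mem this
    rw [Submodule.map_span] at hmap
    refine Submodule.span_le.mpr ?_ hmap
    rintro _ ⟨_, ⟨j, rfl⟩, rfl⟩
    rw [relSpace2]
    exact Submodule.subset_span ⟨hΨmem _ (exRels_mem j), hΨcard j⟩


end Helpers51

/-- **Example 5.1** (`ex:3formal-not-hereditiary`, 2-formality of `A`): the relation
space `F(A)` of the given `11`-hyperplane arrangement in `ℚ^5` has dimension `6`, and
the six listed relations of length `3` form a basis of `F(A)`; in particular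
`F_2(A) = F(A)` and `A` is formal. -/
theorem example51_formal :
    Module.finrank ℚ ↥exRelSpace = 6 ∧
    (∀ j, exRels j ∈ exRelSpace) ∧
    LinearIndependent ℚ exRels ∧
    Submodule.span ℚ (Set.range exRels) = exRelSpace ∧
    exRelSpace2 = exRelSpace ∧
    IsFormal {H | ∃ i, H = LinearMap.ker (exForms i)} :=
  ⟨exRelSpace_finrank, exRels_mem, exRels_indep, exSpan_eq, exRelSpace2_eq, exFormal⟩
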